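/- arXiv:2403.04613 — 2 statements merged into one kernel-verified Lean document; each statement's English description precedes it below -/
import Mathlib

section
/- Let (X, Y, A) ~ P_X × P_{Y|X} × Bernoulli(p_{A|X}) on 𝒳 × 𝒴 × {0,1}, so that A is conditionally independent of Y given X with P(A=1 | X=x) = p_{A|X}(x). Suppose B ⊆ 𝒳 is measurable with P(A=1, X∈B) > 0 and P(A=0, X∈B) > 0, and there exist t > 0 and ε ≥ 0 such that t ≤ p_{A|X}(x)/(1−p_{A|X}(x)) ≤ t(1+ε) for all x ∈ B. Let s : 𝒳 × 𝒴 → ℝ be measurable and S = s(X,Y). Then the total variation distance between the conditional law of S given {A=1, X∈B} and the conditional law of S given {A=0, X∈B} is at most ε; equivalently, |P(S∈D | A=1, X∈B) − P(S∈D | A=0, X∈B)| ≤ ε for every measurable D ⊆ ℝ. -/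
open MeasureTheory ProbabilityTheory
open scoped Classical ENNReal

noncomputable section

lemma key_true {Ω 𝒳 : Type*} [MeasurableSpace Ω] [StandardBorelSpace Ω] [MeasurableSpace 𝒳]
    (μ : Measure Ω) [IsProbabilityMeasure μ]
    (X : Ω → 𝒳) (Y : Ω → ℝ) (A : Ω → Bool)
    (hX : Measurable X) (hY : Measurable Y) (hA : Measurable A)
    (p : 𝒳 → ℝ) (hp : Measurable p) (hp01 : ∀ x, 0 ≤ p x ∧ p x ≤ 1)
    (hCI : CondIndepFun (MeasurableSpace.comap X inferInstance) hX.comap_le Y A μ)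
    (hprop : μ[fun ω => if A ω then (1 : ℝ) else 0
        | MeasurableSpace.comap X inferInstance] =ᵐ[μ] fun ω => p (X ω)) :
    ∀ ⦃W : Set (𝒳 × ℝ)⦄, MeasurableSet W →
      (μ ((fun ω => (X ω, Y ω)) ⁻¹' W ∩ A ⁻¹' {true})).toReal
        = ∫ ω in (fun ω => (X ω, Y ω)) ⁻¹' W, p (X ω) ∂μ := by
  have hm' : MeasurableSpace.comap X inferInstance ≤ (inferInstance : MeasurableSpace Ω) :=
    hX.comap_le
  have hXm' : @Measurable Ω 𝒳 (MeasurableSpace.comap X inferInstance) _ X :=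
    fun U hU => ⟨U, hU, rfl⟩
  have hpX : @Measurable Ω ℝ (MeasurableSpace.comap X inferInstance) _ fun ω => p (X ω) :=
    hp.comp hXm'
  have hZ : Measurable fun ω => (X ω, Y ω) := hX.prodMk hY
  -- integrability helper
  have hint : ∀ f : Ω → ℝ, AEStronglyMeasurable f μ → (∀ ω, ‖f ω‖ ≤ 1) → Integrable f μ :=
    fun f hfm hfb => ⟨hfm, HasFiniteIntegral.of_bounded (C := 1) (Filter.Eventually.of_forall hfb)⟩
  have hintp : Integrable (fun ω => p (X ω)) μ := by
    refine hint _ ((hp.comp hX).aestronglyMeasurable) fun ω => ?_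
    rw [Real.norm_eq_abs, abs_le]
    exact ⟨by linarith [(hp01 (X ω)).1], (hp01 (X ω)).2⟩
  have hintInd : ∀ (E : Set Ω), MeasurableSet E →
      Integrable (E.indicator (fun _ => (1:ℝ))) μ :=
    fun E hE => (integrable_const (1:ℝ)).indicator hE
  -- measure as set integral of indicator
  have meas_int : ∀ (E F : Set Ω), MeasurableSet E →
      (μ (F ∩ E)).toReal = ∫ ω in F, E.indicator (fun _ => (1:ℝ)) ω ∂μ := by
    intro E F hE
    rw [setIntegral_indicator hE, setIntegral_const, smul_eq_mul, mul_one, measureReal_def]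
  -- condexp of indicator of A = p ∘ X
  have hite : (A ⁻¹' {true}).indicator (fun _ => (1:ℝ)) = fun ω => if A ω then 1 else 0 := by
    funext ω; by_cases h : A ω <;> simp [h]
  have hpropA : (μ⟦A ⁻¹' {true} | MeasurableSpace.comap X inferInstance⟧)
      =ᵐ[μ] fun ω => p (X ω) := by
    rw [hite]; exact hprop
  refine MeasurableSpace.induction_on_inter generateFrom_prod.symm isPiSystem_prod ?_ ?_ ?_ ?_
  · simp
  · intro W hW
    obtain ⟨U, hU, V, hV, rfl⟩ := hW
    have hpre : (fun ω => (X ω, Y ω)) ⁻¹' (U ×ˢ V) = X ⁻¹' U ∩ Y ⁻¹' V :=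
      Set.mk_preimage_prod X Y
    rw [hpre]
    have hYV : MeasurableSet (Y ⁻¹' V) := hY hV
    have hAt : MeasurableSet (A ⁻¹' {true}) := hA (measurableSet_singleton true)
    have hXUm : MeasurableSet[MeasurableSpace.comap X inferInstance] (X ⁻¹' U) := ⟨U, hU, rfl⟩
    -- LHS
    have hstep1 : (μ (X ⁻¹' U ∩ Y ⁻¹' V ∩ A ⁻¹' {true})).toReal
        = ∫ ω in X ⁻¹' U, (Y ⁻¹' V ∩ A ⁻¹' {true}).indicator (fun _ => (1:ℝ)) ω ∂μ := by
      rw [← meas_int _ _ (hYV.inter hAt), Set.inter_assoc]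
    have hCI' := (condIndepFun_iff_condExp_inter_preimage_eq_mul
        (hm' := hX.comap_le) hY hA).mp hCI V {true} hV (measurableSet_singleton true)
    have hmul : (μ⟦Y ⁻¹' V ∩ A ⁻¹' {true} | MeasurableSpace.comap X inferInstance⟧)
        =ᵐ[μ] fun ω => (μ⟦Y ⁻¹' V | MeasurableSpace.comap X inferInstance⟧) ω * p (X ω) := by
      filter_upwards [hCI', hpropA] with ω h1 h2
      rw [h1, h2]
    have hstep2 : ∫ ω in X ⁻¹' U, (Y ⁻¹' V ∩ A ⁻¹' {true}).indicator (fun _ => (1:ℝ)) ω ∂μ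
        = ∫ ω in X ⁻¹' U,
            (μ⟦Y ⁻¹' V | MeasurableSpace.comap X inferInstance⟧) ω * p (X ω) ∂μ := by
      rw [← setIntegral_condExp hm' (hintInd _ (hYV.inter hAt)) hXUm]
      exact setIntegral_congr_ae (hX hU) (hmul.mono fun ω h _ => h)
    -- RHS
    have hstep3 : ∫ ω in X ⁻¹' U ∩ Y ⁻¹' V, p (X ω) ∂μ
        = ∫ ω in X ⁻¹' U, ((Y ⁻¹' V).indicator (fun _ => (1:ℝ))) ω * p (X ω) ∂μ := by
      have : ∀ ω, ((Y ⁻¹' V).indicator (fun _ => (1:ℝ))) ω * p (X ω)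
          = (Y ⁻¹' V).indicator (fun ω => p (X ω)) ω := by
        intro ω; by_cases h : ω ∈ Y ⁻¹' V <;> simp [h]
      simp_rw [this]
      rw [setIntegral_indicator hYV]
    have hintprod : Integrable ((fun ω => p (X ω)) * ((Y ⁻¹' V).indicator (fun _ => (1:ℝ)))) μ := by
      refine hint _ ((hp.comp hX).aestronglyMeasurable.mul
        ((stronglyMeasurable_const.indicator hYV).aestronglyMeasurable)) fun ω => ?_
      rcases hp01 (X ω) with ⟨h0, h1⟩
      by_cases h : ω ∈ Y ⁻¹' V <;>
        simp [Pi.mul_apply, h, Real.norm_eq_abs, abs_le] <;> constructor <;> linarith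
    have hstep4 : ∫ ω in X ⁻¹' U, ((Y ⁻¹' V).indicator (fun _ => (1:ℝ))) ω * p (X ω) ∂μ
        = ∫ ω in X ⁻¹' U,
            (μ⟦Y ⁻¹' V | MeasurableSpace.comap X inferInstance⟧) ω * p (X ω) ∂μ := by
      have hpull := condExp_mul_of_stronglyMeasurable_left (m := MeasurableSpace.comap X inferInstance)
        (μ := μ) (hpX.stronglyMeasurable)
        hintprod (hintInd _ hYV)
      calc ∫ ω in X ⁻¹' U, ((Y ⁻¹' V).indicator (fun _ => (1:ℝ))) ω * p (X ω) ∂μ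
          = ∫ ω in X ⁻¹' U,
              ((fun ω => p (X ω)) * ((Y ⁻¹' V).indicator (fun _ => (1:ℝ)))) ω ∂μ := by
            simp_rw [Pi.mul_apply, mul_comm]
        _ = ∫ ω in X ⁻¹' U,
              (μ[(fun ω => p (X ω)) * ((Y ⁻¹' V).indicator (fun _ => (1:ℝ)))
                | MeasurableSpace.comap X inferInstance]) ω ∂μ :=
            (setIntegral_condExp hm' hintprod hXUm).symm
        _ = ∫ ω in X ⁻¹' U,
              (μ⟦Y ⁻¹' V | MeasurableSpace.comap X inferInstance⟧) ω * p (X ω) ∂μ := by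
            refine setIntegral_congr_ae (hX hU) (hpull.mono fun ω h _ => ?_)
            rw [h, Pi.mul_apply, mul_comm]
    rw [hstep1, hstep2, hstep3, hstep4]
  · intro W hWm ih
    have hWc : (fun ω => (X ω, Y ω)) ⁻¹' Wᶜ = ((fun ω => (X ω, Y ω)) ⁻¹' W)ᶜ := rfl
    have hAt : MeasurableSet (A ⁻¹' {true}) := hA (measurableSet_singleton true)
    have hZW : MeasurableSet ((fun ω => (X ω, Y ω)) ⁻¹' W) := hZ hWm
    have hsplit : μ ((fun ω => (X ω, Y ω)) ⁻¹' W ∩ A ⁻¹' {true})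
        + μ (((fun ω => (X ω, Y ω)) ⁻¹' W)ᶜ ∩ A ⁻¹' {true}) = μ (A ⁻¹' {true}) := by
      rw [Set.inter_comm _ (A ⁻¹' {true}), Set.inter_comm _ (A ⁻¹' {true})]
      have := measure_inter_add_diff (μ := μ) (A ⁻¹' {true}) hZW
      rwa [Set.diff_eq] at this
    have hbase : (μ (A ⁻¹' {true})).toReal = ∫ ω, p (X ω) ∂μ := by
      have h1 : ∫ ω, p (X ω) ∂μ = ∫ ω, (fun ω => if A ω then (1:ℝ) else 0) ω ∂μ := by
        rw [integral_congr_ae hprop.symm, integral_condExp hm']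
      rw [h1, ← hite, ← setIntegral_univ, ← meas_int _ _ hAt, Set.univ_inter]
    have hisub : ∫ ω in ((fun ω => (X ω, Y ω)) ⁻¹' W)ᶜ, p (X ω) ∂μ
        = ∫ ω, p (X ω) ∂μ - ∫ ω in (fun ω => (X ω, Y ω)) ⁻¹' W, p (X ω) ∂μ := by
      have := integral_add_compl hZW hintp
      linarith
    have hfin1 : μ ((fun ω => (X ω, Y ω)) ⁻¹' W ∩ A ⁻¹' {true}) ≠ ⊤ := measure_ne_top μ _
    have hfin2 : μ (((fun ω => (X ω, Y ω)) ⁻¹' W)ᶜ ∩ A ⁻¹' {true}) ≠ ⊤ := measure_ne_top μ _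
    have := congrArg ENNReal.toReal hsplit
    rw [ENNReal.toReal_add hfin1 hfin2] at this
    rw [hWc, hisub, ← ih, ← hbase]
    linarith
  · intro f hdisj hfm ih
    have hAt : MeasurableSet (A ⁻¹' {true}) := hA (measurableSet_singleton true)
    have hpre : (fun ω => (X ω, Y ω)) ⁻¹' (⋃ i, f i) = ⋃ i, (fun ω => (X ω, Y ω)) ⁻¹' f i := by
      rw [Set.preimage_iUnion]
    rw [hpre]
    have hmeasi : ∀ i, MeasurableSet ((fun ω => (X ω, Y ω)) ⁻¹' f i ∩ A ⁻¹' {true}) :=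
      fun i => (hZ (hfm i)).inter hAt
    have hdisj' : Pairwise (Function.onFun Disjoint
        fun i => (fun ω => (X ω, Y ω)) ⁻¹' f i ∩ A ⁻¹' {true}) := by
      intro i j hij
      exact ((hdisj hij).preimage _).mono Set.inter_subset_left Set.inter_subset_left
    have hUnion_inter : (⋃ i, (fun ω => (X ω, Y ω)) ⁻¹' f i) ∩ A ⁻¹' {true}
        = ⋃ i, ((fun ω => (X ω, Y ω)) ⁻¹' f i ∩ A ⁻¹' {true}) := by
      rw [Set.iUnion_inter]
    rw [hUnion_inter, measure_iUnion hdisj' hmeasi]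
    rw [ENNReal.tsum_toReal_eq fun i => measure_ne_top μ _]
    rw [integral_iUnion (fun i => hZ (hfm i)) (fun i j hij => (hdisj hij).preimage _)
      hintp.integrableOn]
    refine tsum_congr fun i => ?_
    rw [ih i]


lemma ratio_bound_aux {a b c d t ε : ℝ} (ht : 0 < t) (hε : 0 ≤ ε) (hb : 0 < b) (hd : 0 < d)
    (h1 : t * c ≤ a) (h2 : a ≤ t * (1 + ε) * c) (h3 : t * d ≤ b) (h4 : b ≤ t * (1 + ε) * d)
    (hcd : c ≤ d) (hc : 0 ≤ c) :
    |a / b - c / d| ≤ ε := by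
  have hbd : 0 < b * d := mul_pos hb hd
  have key : |a * d - c * b| ≤ ε * (b * d) := by
    rw [abs_le]
    constructor
    · nlinarith [mul_le_mul_of_nonneg_right h4 hc, mul_le_mul_of_nonneg_right h1 hd.le,
        mul_nonneg (mul_nonneg ht.le hε) (sub_nonneg.mpr hcd)]
    · nlinarith [mul_le_mul_of_nonneg_right h2 hd.le, mul_le_mul_of_nonneg_right h3 hc,
        mul_nonneg (mul_nonneg ht.le hε) (sub_nonneg.mpr hcd)]
  have heq : a / b - c / d = (a * d - c * b) / (b * d) := by
    field_simp
  rw [heq, abs_div, abs_of_pos hbd, div_le_iff₀ hbd]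
  exact key


/-- **Lemma A.1 (bounded propensity score implies closeness of conditional score
distributions for observed and missing data).**
Let `(X, Y, A) ~ P_X × P_{Y|X} × Bernoulli(p_{A|X})`, i.e. `Y ⟂ A | X` and
`P(A = 1 | X) = p(X)`. If on a measurable set `B ⊆ 𝒳` the odds of the propensity score satisfy
`t ≤ p(x)/(1 − p(x)) ≤ t(1 + ε)` for all `x ∈ B`, then for `S = s(X, Y)`,
`|P(S ∈ D | A = 1, X ∈ B) − P(S ∈ D | A = 0, X ∈ B)| ≤ ε` for every measurable `D ⊆ ℝ`,
i.e. `d_TV(P_{S | A=1, X∈B}, P_{S | A=0, X∈B}) ≤ ε`. -/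
theorem propensity_balancing_TV
    {Ω 𝒳 : Type*} [MeasurableSpace Ω] [StandardBorelSpace Ω] [MeasurableSpace 𝒳]
    (μ : Measure Ω) [IsProbabilityMeasure μ]
    (X : Ω → 𝒳) (Y : Ω → ℝ) (A : Ω → Bool)
    (hX : Measurable X) (hY : Measurable Y) (hA : Measurable A)
    (p : 𝒳 → ℝ) (hp : Measurable p) (hp01 : ∀ x, 0 ≤ p x ∧ p x ≤ 1)
    -- `A ⟂ Y | X`
    (hCI : CondIndepFun (MeasurableSpace.comap X inferInstance) hX.comap_le Y A μ)
    -- `p` is the propensity score: `P(A = 1 | X) = p(X)`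
    (hprop : μ[fun ω => if A ω then (1 : ℝ) else 0
        | MeasurableSpace.comap X inferInstance] =ᵐ[μ] fun ω => p (X ω))
    (B : Set 𝒳) (hB : MeasurableSet B)
    (t : ℝ) (ht : 0 < t) (ε : ℝ) (hε : 0 ≤ ε)
    -- bounded odds of the propensity score on `B`
    (hodds : ∀ x ∈ B, t ≤ p x / (1 - p x) ∧ p x / (1 - p x) ≤ t * (1 + ε))
    -- `P(A = 1, X ∈ B) > 0` and `P(A = 0, X ∈ B) > 0`
    (h1 : μ {ω | A ω = true ∧ X ω ∈ B} ≠ 0)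
    (h0 : μ {ω | A ω = false ∧ X ω ∈ B} ≠ 0)
    (s : 𝒳 → ℝ → ℝ) (hs : Measurable (Function.uncurry s)) :
    ∀ D : Set ℝ, MeasurableSet D →
      |(μ[|{ω | A ω = true ∧ X ω ∈ B}] {ω | s (X ω) (Y ω) ∈ D}).toReal
        - (μ[|{ω | A ω = false ∧ X ω ∈ B}] {ω | s (X ω) (Y ω) ∈ D}).toReal| ≤ ε := by
  intro D hD
  have hZ : Measurable fun ω => (X ω, Y ω) := hX.prodMk hY
  have hAt : MeasurableSet (A ⁻¹' {true}) := hA (measurableSet_singleton true)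
  have hAf : MeasurableSet (A ⁻¹' {false}) := hA (measurableSet_singleton false)
  have key1 := key_true μ X Y A hX hY hA p hp hp01 hCI hprop
  have hintp : Integrable (fun ω => p (X ω)) μ := ⟨(hp.comp hX).aestronglyMeasurable,
    HasFiniteIntegral.of_bounded (C := 1) (Filter.Eventually.of_forall fun ω => by
      rw [Real.norm_eq_abs, abs_le]
      exact ⟨by linarith [(hp01 (X ω)).1], (hp01 (X ω)).2⟩)⟩
  have hintq : Integrable (fun ω => 1 - p (X ω)) μ :=
    (integrable_const (1:ℝ)).sub hintp
  -- the `A = false` analogue of `key1`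
  have key0 : ∀ ⦃W : Set (𝒳 × ℝ)⦄, MeasurableSet W →
      (μ ((fun ω => (X ω, Y ω)) ⁻¹' W ∩ A ⁻¹' {false})).toReal
        = ∫ ω in (fun ω => (X ω, Y ω)) ⁻¹' W, (1 - p (X ω)) ∂μ := by
    intro W hW
    have hAfc : A ⁻¹' {false} = (A ⁻¹' {true})ᶜ := by
      ext ω; by_cases h : A ω <;> simp [h]
    have hZW : MeasurableSet ((fun ω => (X ω, Y ω)) ⁻¹' W) := hZ hW
    have hsplit : μ ((fun ω => (X ω, Y ω)) ⁻¹' W ∩ A ⁻¹' {true})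
        + μ ((fun ω => (X ω, Y ω)) ⁻¹' W ∩ A ⁻¹' {false})
        = μ ((fun ω => (X ω, Y ω)) ⁻¹' W) := by
      rw [hAfc, ← Set.diff_eq]
      exact measure_inter_add_diff _ hAt
    have hsub : ∫ ω in (fun ω => (X ω, Y ω)) ⁻¹' W, (1 - p (X ω)) ∂μ
        = (μ ((fun ω => (X ω, Y ω)) ⁻¹' W)).toReal
          - ∫ ω in (fun ω => (X ω, Y ω)) ⁻¹' W, p (X ω) ∂μ := by
      rw [integral_sub (integrableOn_const (C := (1:ℝ)) (measure_ne_top μ _))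
        hintp.integrableOn, setIntegral_const, smul_eq_mul, mul_one, measureReal_def]
    have h := congrArg ENNReal.toReal hsplit
    rw [ENNReal.toReal_add (measure_ne_top μ _) (measure_ne_top μ _)] at h
    rw [hsub, ← key1 hW]
    linarith
  -- the two events, rewritten as preimages
  have hW₁ : MeasurableSet (Prod.fst ⁻¹' B : Set (𝒳 × ℝ)) := measurable_fst hB
  have hW₂ : MeasurableSet (Prod.fst ⁻¹' B ∩ Function.uncurry s ⁻¹' D : Set (𝒳 × ℝ)) :=
    hW₁.inter (hs hD)
  have hE₁ : {ω | A ω = true ∧ X ω ∈ B}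
      = (fun ω => (X ω, Y ω)) ⁻¹' (Prod.fst ⁻¹' B) ∩ A ⁻¹' {true} := by
    ext ω; simp [Set.mem_preimage]; tauto
  have hE₀ : {ω | A ω = false ∧ X ω ∈ B}
      = (fun ω => (X ω, Y ω)) ⁻¹' (Prod.fst ⁻¹' B) ∩ A ⁻¹' {false} := by
    ext ω; simp [Set.mem_preimage]; tauto
  have hE₁D : {ω | A ω = true ∧ X ω ∈ B} ∩ {ω | s (X ω) (Y ω) ∈ D}
      = (fun ω => (X ω, Y ω)) ⁻¹' (Prod.fst ⁻¹' B ∩ Function.uncurry s ⁻¹' D)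
        ∩ A ⁻¹' {true} := by
    ext ω; simp [Set.mem_preimage, Function.uncurry]; tauto
  have hE₀D : {ω | A ω = false ∧ X ω ∈ B} ∩ {ω | s (X ω) (Y ω) ∈ D}
      = (fun ω => (X ω, Y ω)) ⁻¹' (Prod.fst ⁻¹' B ∩ Function.uncurry s ⁻¹' D)
        ∩ A ⁻¹' {false} := by
    ext ω; simp [Set.mem_preimage, Function.uncurry]; tauto
  have hE₁meas : MeasurableSet {ω | A ω = true ∧ X ω ∈ B} := by
    rw [hE₁]; exact (hZ hW₁).inter hAt
  have hE₀meas : MeasurableSet {ω | A ω = false ∧ X ω ∈ B} := by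
    rw [hE₀]; exact (hZ hW₁).inter hAf
  -- abbreviations for the four integrals
  set a : ℝ := ∫ ω in (fun ω => (X ω, Y ω)) ⁻¹' (Prod.fst ⁻¹' B ∩ Function.uncurry s ⁻¹' D),
    p (X ω) ∂μ with ha_def
  set b : ℝ := ∫ ω in (fun ω => (X ω, Y ω)) ⁻¹' (Prod.fst ⁻¹' B), p (X ω) ∂μ with hb_def
  set c : ℝ := ∫ ω in (fun ω => (X ω, Y ω)) ⁻¹' (Prod.fst ⁻¹' B ∩ Function.uncurry s ⁻¹' D),
    (1 - p (X ω)) ∂μ with hc_def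
  set d : ℝ := ∫ ω in (fun ω => (X ω, Y ω)) ⁻¹' (Prod.fst ⁻¹' B), (1 - p (X ω)) ∂μ with hd_def
  -- identify the conditional probabilities with ratios of integrals
  have hval1 : (μ[|{ω | A ω = true ∧ X ω ∈ B}] {ω | s (X ω) (Y ω) ∈ D}).toReal = a / b := by
    rw [cond_apply hE₁meas, ENNReal.toReal_mul, ENNReal.toReal_inv, hE₁D, key1 hW₂, ← ha_def]
    have hbb : (μ {ω | A ω = true ∧ X ω ∈ B}).toReal = b := by
      rw [hE₁, key1 hW₁, ← hb_def]
    rw [hbb, inv_mul_eq_div]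
  have hval0 : (μ[|{ω | A ω = false ∧ X ω ∈ B}] {ω | s (X ω) (Y ω) ∈ D}).toReal = c / d := by
    rw [cond_apply hE₀meas, ENNReal.toReal_mul, ENNReal.toReal_inv, hE₀D, key0 hW₂, ← hc_def]
    have hdd : (μ {ω | A ω = false ∧ X ω ∈ B}).toReal = d := by
      rw [hE₀, key0 hW₁, ← hd_def]
    rw [hdd, inv_mul_eq_div]
  -- positivity of denominators
  have hb_pos : 0 < b := by
    have : (μ {ω | A ω = true ∧ X ω ∈ B}).toReal = b := by rw [hE₁, key1 hW₁, ← hb_def]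
    rw [← this]
    exact ENNReal.toReal_pos h1 (measure_ne_top μ _)
  have hd_pos : 0 < d := by
    have : (μ {ω | A ω = false ∧ X ω ∈ B}).toReal = d := by rw [hE₀, key0 hW₁, ← hd_def]
    rw [← this]
    exact ENNReal.toReal_pos h0 (measure_ne_top μ _)
  -- pointwise bounds on `B`
  have hpt : ∀ x ∈ B, t * (1 - p x) ≤ p x ∧ p x ≤ t * (1 + ε) * (1 - p x) := by
    intro x hx
    have hlt : p x < 1 := by
      rcases (hp01 x) with ⟨hx0, hx1⟩
      rcases lt_or_eq_of_le hx1 with h | h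
      · exact h
      · exfalso
        have := (hodds x hx).1
        rw [h] at this
        simp at this
        linarith
    have hpos : 0 < 1 - p x := by linarith
    constructor
    · have := (hodds x hx).1
      rw [le_div_iff₀ hpos] at this
      linarith
    · have := (hodds x hx).2
      rw [div_le_iff₀ hpos] at this
      linarith
  have hmemB : ∀ {W : Set (𝒳 × ℝ)}, W ⊆ Prod.fst ⁻¹' B →
      ∀ ω ∈ (fun ω => (X ω, Y ω)) ⁻¹' W, X ω ∈ B := fun hWB ω hω => hWB hω
  -- integral comparisons
  have hintq' : Integrable (fun ω => t * (1 - p (X ω))) μ := hintq.const_mul t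
  have hintq'' : Integrable (fun ω => t * (1 + ε) * (1 - p (X ω))) μ := hintq.const_mul _
  have hZW₁ : MeasurableSet ((fun ω => (X ω, Y ω)) ⁻¹' (Prod.fst ⁻¹' B)) := hZ hW₁
  have hZW₂ : MeasurableSet ((fun ω => (X ω, Y ω)) ⁻¹'
    (Prod.fst ⁻¹' B ∩ Function.uncurry s ⁻¹' D)) := hZ hW₂
  have hmem₂ : ∀ ω ∈ (fun ω => (X ω, Y ω)) ⁻¹' (Prod.fst ⁻¹' B ∩ Function.uncurry s ⁻¹' D),
      X ω ∈ B := fun ω hω => hω.1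
  have hmem₁ : ∀ ω ∈ (fun ω => (X ω, Y ω)) ⁻¹' (Prod.fst ⁻¹' B), X ω ∈ B := fun ω hω => hω
  have h2 : a ≤ t * (1 + ε) * c := by
    rw [ha_def, hc_def, ← integral_const_mul]
    exact setIntegral_mono_on hintp.integrableOn hintq''.integrableOn hZW₂
      fun ω hω => (hpt _ (hmem₂ ω hω)).2
  have h1' : t * c ≤ a := by
    rw [ha_def, hc_def, ← integral_const_mul]
    exact setIntegral_mono_on hintq'.integrableOn hintp.integrableOn hZW₂
      fun ω hω => (hpt _ (hmem₂ ω hω)).1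
  have h4 : b ≤ t * (1 + ε) * d := by
    rw [hb_def, hd_def, ← integral_const_mul]
    exact setIntegral_mono_on hintp.integrableOn hintq''.integrableOn hZW₁
      fun ω hω => (hpt _ (hmem₁ ω hω)).2
  have h3 : t * d ≤ b := by
    rw [hb_def, hd_def, ← integral_const_mul]
    exact setIntegral_mono_on hintq'.integrableOn hintp.integrableOn hZW₁
      fun ω hω => (hpt _ (hmem₁ ω hω)).1
  have hc_nonneg : 0 ≤ c := by
    rw [hc_def]
    exact setIntegral_nonneg hZW₂ fun ω _ => by linarith [(hp01 (X ω)).2]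
  have hcd : c ≤ d := by
    rw [hc_def, hd_def]
    refine setIntegral_mono_set hintq.integrableOn
      (Filter.Eventually.of_forall fun ω => by simp; linarith [(hp01 (X ω)).2])
      (HasSubset.Subset.eventuallyLE ?_)
    exact Set.preimage_mono Set.inter_subset_left
  rw [hval1, hval0]
  exact ratio_bound_aux ht hε hb_pos hd_pos h1' h2 h3 h4 hcd hc_nonneg
end
end

section
/- Let (X, Y, A) ~ P_X × P_{Y|X} × Bernoulli(p_{A|X}) with 0 < p_{A|X}(x) < 1 for all x, let p̂_{A|X} : 𝒳 → (0,1) be any measurable function, and let δ = e^{2‖log f_{p,p̂}‖_∞} − 1 where f_{p,p̂}(x) = [p_{A|X}(x)/(1−p_{A|X}(x))]/[p̂_{A|X}(x)/(1−p̂_{A|X}(x))]. Fix ε > 0, k ∈ ℤ, and let D_k = {x : p̂_{A|X}(x)/(1−p̂_{A|X}(x)) ∈ [(1+ε)^k, (1+ε)^{k+1})}. If P(A=1, X∈D_k) > 0 and P(A=0, X∈D_k) > 0, then for S = s(X,Y) with any measurable s : 𝒳 × 𝒴 → ℝ, the total variation distance between the conditional law of S given {A=1, X∈D_k} and the conditional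 law of S given {A=0, X∈D_k} is at most ε + δ + εδ. -/
open MeasureTheory ProbabilityTheory
open scoped Classical ENNReal

noncomputable section

/-- Propensity score `ε`-discretization bin: `D_k = {x : p̂(x)/(1 − p̂(x)) ∈ [(1+ε)^k, (1+ε)^{k+1})}`. -/
def binSet {𝒳 : Type*} (phat : 𝒳 → ℝ) (ε : ℝ) (k : ℤ) : Set 𝒳 :=
  {x | (1 + ε) ^ k ≤ phat x / (1 - phat x) ∧ phat x / (1 - phat x) < (1 + ε) ^ (k + 1)}

section AuxCI

variable {Ω : Type*} {m mY mA mΩ : MeasurableSpace Ω} {μ : Measure Ω}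

lemma aux_condIndep_sup [StandardBorelSpace Ω]
    (hm : m ≤ mΩ) (hY : mY ≤ mΩ) (hA : mA ≤ mΩ) [IsProbabilityMeasure μ]
    (h : CondIndep m mY mA hm μ) :
    CondIndep m (m ⊔ mY) mA hm μ := by
  set p1 : Set (Set Ω) := {st | ∃ C E, MeasurableSet[m] C ∧ MeasurableSet[mY] E ∧ st = C ∩ E}
    with hp1_def
  have hgen1 : m ⊔ mY = MeasurableSpace.generateFrom p1 := by
    refine le_antisymm (sup_le ?_ ?_) (MeasurableSpace.generateFrom_le ?_)
    · intro C hC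
      exact MeasurableSpace.measurableSet_generateFrom ⟨C, Set.univ, hC, MeasurableSet.univ,
        (Set.inter_univ C).symm⟩
    · intro E hE
      exact MeasurableSpace.measurableSet_generateFrom ⟨Set.univ, E, MeasurableSet.univ, hE,
        (Set.univ_inter E).symm⟩
    · rintro t ⟨C, E, hC, hE, rfl⟩
      exact MeasurableSet.inter (le_sup_left (a := m) (b := mY) _ hC)
        (le_sup_right (a := m) (b := mY) _ hE)
  have hpi1 : IsPiSystem p1 := by
    rintro t1 ⟨C1, E1, hC1, hE1, rfl⟩ t2 ⟨C2, E2, hC2, hE2, rfl⟩ -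
    exact ⟨C1 ∩ C2, E1 ∩ E2, hC1.inter hC2, hE1.inter hE2, by
      rw [Set.inter_inter_inter_comm]⟩
  have hpi2 : IsPiSystem {t | MeasurableSet[mA] t} := by
    rintro t1 ht1 t2 ht2 -
    exact MeasurableSet.inter ht1 ht2
  refine ProbabilityTheory.CondIndepSets.condIndep (sup_le hm hY) hA hpi1 hpi2 hgen1
    (@MeasurableSpace.generateFrom_measurableSet Ω mA).symm ?_
  have hprod := (ProbabilityTheory.condIndep_iff m mY mA hm hY hA μ).mp h
  rw [ProbabilityTheory.condIndepSets_iff]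
  rotate_left
  · rintro t ⟨C, E, hC, hE, rfl⟩; exact (hm _ hC).inter (hY _ hE)
  · exact fun t ht => hA _ ht
  rintro t1 t2 ⟨C, E, hC, hE, rfl⟩ ht2
  have hE' : MeasurableSet E := hY _ hE
  have ht2' : MeasurableSet t2 := hA _ ht2
  have key : ∀ S : Set Ω, MeasurableSet S →
      (μ⟦C ∩ S | m⟧) =ᵐ[μ] Set.indicator C (μ⟦S | m⟧) := by
    intro S hS
    have h1 : Set.indicator (C ∩ S) (fun _ => (1:ℝ))
        = Set.indicator C (Set.indicator S (fun _ => (1:ℝ))) := by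
      rw [Set.indicator_indicator]
    rw [h1]
    exact condExp_indicator ((integrable_const (1:ℝ)).indicator hS) hC
  have h2 := hprod E t2 hE ht2
  have hassoc : C ∩ E ∩ t2 = C ∩ (E ∩ t2) := Set.inter_assoc C E t2
  calc (μ⟦C ∩ E ∩ t2 | m⟧) =ᵐ[μ] Set.indicator C (μ⟦E ∩ t2 | m⟧) := by
        rw [hassoc]; exact key _ (hE'.inter ht2')
    _ =ᵐ[μ] Set.indicator C ((μ⟦E | m⟧) * (μ⟦t2 | m⟧)) := by
        filter_upwards [h2] with ω hω
        by_cases hωC : ω ∈ C <;> simp [Set.indicator, hωC, hω]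
    _ = (Set.indicator C (μ⟦E | m⟧)) * (μ⟦t2 | m⟧) := by
        funext ω
        by_cases hωC : ω ∈ C <;> simp [Set.indicator, hωC]
    _ =ᵐ[μ] (μ⟦C ∩ E | m⟧) * (μ⟦t2 | m⟧) := by
        filter_upwards [key E hE'] with ω hω
        simp [Pi.mul_apply, hω]

end AuxCI

set_option maxHeartbeats 1000000 in
/-- **Closeness of conditional score distributions within a bin built from an estimated
propensity score.**
Let `(X, Y, A) ~ P_X × P_{Y|X} × Bernoulli(p_{A|X})` with `0 < p(x) < 1`, let
`p̂ : 𝒳 → (0,1)` be measurable, and let `δ = e^{2‖log f_{p,p̂}‖_∞} − 1` for the odds ratio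
`f_{p,p̂}`. Fix `ε > 0`, `k ∈ ℤ`, and the bin `D_k` built from `p̂`. If
`P(A=1, X∈D_k) > 0` and `P(A=0, X∈D_k) > 0`, then for `S = s(X,Y)`,
`|P(S ∈ D | A=1, X∈D_k) − P(S ∈ D | A=0, X∈D_k)| ≤ ε + δ + εδ` for every measurable `D`,
i.e. the total variation distance is at most `ε + δ + εδ`. -/
theorem propensity_balancing_TV_estimated
    {Ω 𝒳 : Type*} [MeasurableSpace Ω] [StandardBorelSpace Ω] [MeasurableSpace 𝒳]
    (μ : Measure Ω) [IsProbabilityMeasure μ]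
    (X : Ω → 𝒳) (Y : Ω → ℝ) (A : Ω → Bool)
    (hX : Measurable X) (hY : Measurable Y) (hA : Measurable A)
    (p : 𝒳 → ℝ) (hp : Measurable p) (hp01 : ∀ x, 0 < p x ∧ p x < 1)
    (phat : 𝒳 → ℝ) (hphat : Measurable phat) (hphat01 : ∀ x, 0 < phat x ∧ phat x < 1)
    -- `A ⟂ Y | X`
    (hCI : CondIndepFun (MeasurableSpace.comap X inferInstance) hX.comap_le Y A μ)
    -- `p` is the propensity score: `P(A = 1 | X) = p(X)`
    (hprop : μ[fun ω => if A ω then (1 : ℝ) else 0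
        | MeasurableSpace.comap X inferInstance] =ᵐ[μ] fun ω => p (X ω))
    -- `c` is a uniform bound on `|log f_{p,p̂}|`, and `δ = e^{2c} − 1`
    (c : ℝ)
    (hc : ∀ x, |Real.log ((p x / (1 - p x)) / (phat x / (1 - phat x)))| ≤ c)
    (δ : ℝ) (hδ : δ = Real.exp (2 * c) - 1)
    (ε : ℝ) (hε : 0 < ε) (k : ℤ)
    -- `P(A = 1, X ∈ D_k) > 0` and `P(A = 0, X ∈ D_k) > 0`
    (h1 : μ {ω | A ω = true ∧ X ω ∈ binSet phat ε k} ≠ 0)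
    (h0 : μ {ω | A ω = false ∧ X ω ∈ binSet phat ε k} ≠ 0)
    (s : 𝒳 → ℝ → ℝ) (hs : Measurable (Function.uncurry s)) :
    ∀ D : Set ℝ, MeasurableSet D →
      |(μ[|{ω | A ω = true ∧ X ω ∈ binSet phat ε k}] {ω | s (X ω) (Y ω) ∈ D}).toReal
        - (μ[|{ω | A ω = false ∧ X ω ∈ binSet phat ε k}] {ω | s (X ω) (Y ω) ∈ D}).toReal|
        ≤ ε + δ + ε * δ := by
  intro D hD
  have hm : MeasurableSpace.comap X inferInstance ≤ ‹MeasurableSpace Ω› := hX.comap_le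
  have hDkm : MeasurableSet (binSet phat ε k) := by
    have hf : Measurable fun x => phat x / (1 - phat x) :=
      hphat.div (measurable_const.sub hphat)
    exact (measurableSet_le measurable_const hf).inter (measurableSet_lt hf measurable_const)
  set B : Set Ω := X ⁻¹' (binSet phat ε k) with hB_def
  have hBm : MeasurableSet[MeasurableSpace.comap X inferInstance] B := ⟨binSet phat ε k, hDkm, rfl⟩
  have hB : MeasurableSet B := hm B hBm
  set At : Set Ω := A ⁻¹' {true} with hAt_def
  have hAt : MeasurableSet At := hA (measurableSet_singleton true)
  set T : Set Ω := {ω | s (X ω) (Y ω) ∈ D} with hT_def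
  have hsXY : Measurable fun ω => s (X ω) (Y ω) := hs.comp (hX.prodMk hY)
  have hT : MeasurableSet T := hsXY hD
  have hE1 : {ω | A ω = true ∧ X ω ∈ binSet phat ε k} = At ∩ B := by
    ext ω; simp [hAt_def, hB_def]
  have hE0 : {ω | A ω = false ∧ X ω ∈ binSet phat ε k} = Atᶜ ∩ B := by
    ext ω; simp [hAt_def, hB_def]
  -- conditional independence upgrade
  have hCI1 : CondIndep (MeasurableSpace.comap X inferInstance)
      (MeasurableSpace.comap Y inferInstance)
      (MeasurableSpace.comap A inferInstance) hm μ := by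
    rw [condIndepFun_iff_condIndep] at hCI
    exact hCI
  have hCI2 := aux_condIndep_sup hm hY.comap_le hA.comap_le hCI1
  have hTsup : MeasurableSet[MeasurableSpace.comap X inferInstance
      ⊔ MeasurableSpace.comap Y inferInstance] T := by
    have hXm : Measurable[MeasurableSpace.comap X inferInstance
        ⊔ MeasurableSpace.comap Y inferInstance] X :=
      Measurable.le le_sup_left (measurable_iff_comap_le.mpr le_rfl)
    have hYm : Measurable[MeasurableSpace.comap X inferInstance
        ⊔ MeasurableSpace.comap Y inferInstance] Y :=
      Measurable.le le_sup_right (measurable_iff_comap_le.mpr le_rfl)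
    exact (hs.comp (hXm.prodMk hYm)) hD
  have hAtA : MeasurableSet[MeasurableSpace.comap A inferInstance] At :=
    ⟨{true}, measurableSet_singleton true, rfl⟩
  have hprodAe : (μ⟦T ∩ At | MeasurableSpace.comap X inferInstance⟧)
      =ᵐ[μ] (μ⟦T | MeasurableSpace.comap X inferInstance⟧)
        * (μ⟦At | MeasurableSpace.comap X inferInstance⟧) :=
    (condIndep_iff _ _ _ hm (sup_le hm hY.comap_le) hA.comap_le μ).mp hCI2 T At hTsup hAtA
  set g : Ω → ℝ := μ[Set.indicator T fun _ => (1:ℝ) | MeasurableSpace.comap X inferInstance]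
    with hg_def
  have hpX : (μ⟦At | MeasurableSpace.comap X inferInstance⟧) =ᵐ[μ] fun ω => p (X ω) := by
    have hAind : (fun ω => if A ω then (1:ℝ) else 0) = Set.indicator At fun _ => (1:ℝ) := by
      funext ω; by_cases h : A ω <;> simp [hAt_def, Set.indicator, h]
    rw [← hAind]; exact hprop
  have hint : ∀ S : Set Ω, MeasurableSet S →
      Integrable (Set.indicator S fun _ => (1:ℝ)) μ :=
    fun S hS => (integrable_const 1).indicator hS
  have key : ∀ S : Set Ω, MeasurableSet S →
      (μ (S ∩ B)).toReal
        = ∫ ω in B, (μ⟦S | MeasurableSpace.comap X inferInstance⟧) ω ∂μ := by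
    intro S hS
    rw [Set.inter_comm S B, setIntegral_condExp hm (hint S hS) hBm, setIntegral_indicator hS,
      setIntegral_const, smul_eq_mul, mul_one, measureReal_def]
  -- the four integral identities
  have e1T : (μ ((At ∩ B) ∩ T)).toReal = ∫ ω in B, g ω * p (X ω) ∂μ := by
    have h1 : (At ∩ B) ∩ T = (T ∩ At) ∩ B := by
      ext ω; simp only [Set.mem_inter_iff]; tauto
    rw [h1, key _ (hT.inter hAt)]
    refine setIntegral_congr_ae hB ?_
    filter_upwards [hprodAe, hpX] with ω hω1 hω2 _
    rw [hω1, Pi.mul_apply, hω2]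
  have e1 : (μ (At ∩ B)).toReal = ∫ ω in B, p (X ω) ∂μ := by
    rw [key At hAt]
    exact setIntegral_congr_ae hB (by filter_upwards [hpX] with ω hω _ using hω)
  have hcond0 : (μ⟦T ∩ Atᶜ | MeasurableSpace.comap X inferInstance⟧)
      =ᵐ[μ] fun ω => g ω * (1 - p (X ω)) := by
    have hsub : Set.indicator (T ∩ Atᶜ) (fun _ => (1:ℝ))
        = (Set.indicator T fun _ => (1:ℝ)) - (Set.indicator (T ∩ At) fun _ => (1:ℝ)) := by
      funext ω; by_cases h1 : ω ∈ T <;> by_cases h2 : ω ∈ At <;>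
        simp [Set.indicator, h1, h2]
    rw [hsub]
    calc μ[(Set.indicator T fun _ => (1:ℝ)) - (Set.indicator (T ∩ At) fun _ => (1:ℝ))
          | MeasurableSpace.comap X inferInstance]
        =ᵐ[μ] g - (μ⟦T ∩ At | MeasurableSpace.comap X inferInstance⟧) :=
          condExp_sub (hint T hT) (hint _ (hT.inter hAt)) _
      _ =ᵐ[μ] fun ω => g ω * (1 - p (X ω)) := by
          filter_upwards [hprodAe, hpX] with ω hω1 hω2
          simp only [Pi.sub_apply, hω1, Pi.mul_apply, hω2]
          ring
  have e0T : (μ ((Atᶜ ∩ B) ∩ T)).toReal = ∫ ω in B, g ω * (1 - p (X ω)) ∂μ := by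
    have h1 : (Atᶜ ∩ B) ∩ T = (T ∩ Atᶜ) ∩ B := by
      ext ω; simp only [Set.mem_inter_iff]; tauto
    rw [h1, key _ (hT.inter hAt.compl)]
    refine setIntegral_congr_ae hB ?_
    filter_upwards [hcond0] with ω hω _
    rw [hω]
  have e0 : (μ (Atᶜ ∩ B)).toReal = ∫ ω in B, (1 - p (X ω)) ∂μ := by
    rw [key Atᶜ hAt.compl]
    have hsub : Set.indicator Atᶜ (fun _ => (1:ℝ))
        = (fun _ => (1:ℝ)) - (Set.indicator At fun _ => (1:ℝ)) := by
      funext ω; by_cases h2 : ω ∈ At <;> simp [Set.indicator, h2]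
    refine setIntegral_congr_ae hB ?_
    have : (μ⟦Atᶜ | MeasurableSpace.comap X inferInstance⟧)
        =ᵐ[μ] fun ω => 1 - p (X ω) := by
      rw [hsub]
      calc μ[(fun _ => (1:ℝ)) - (Set.indicator At fun _ => (1:ℝ))
            | MeasurableSpace.comap X inferInstance]
          =ᵐ[μ] μ[(fun _ => (1:ℝ)) | MeasurableSpace.comap X inferInstance]
            - (μ⟦At | MeasurableSpace.comap X inferInstance⟧) :=
            condExp_sub (integrable_const 1) (hint At hAt) _
        _ =ᵐ[μ] fun ω => 1 - p (X ω) := by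
            rw [condExp_const hm]
            filter_upwards [hpX] with ω hω
            simp only [Pi.sub_apply, hω]
    filter_upwards [this] with ω hω _
    rw [hω]
  -- positivity of denominators
  have hμ1 : μ (At ∩ B) ≠ 0 := by rw [← hE1]; exact h1
  have hμ0 : μ (Atᶜ ∩ B) ≠ 0 := by rw [← hE0]; exact h0
  set a : ℝ := ∫ ω in B, p (X ω) ∂μ with ha_def
  set b : ℝ := ∫ ω in B, (1 - p (X ω)) ∂μ with hb_def
  set u : ℝ := ∫ ω in B, g ω * p (X ω) ∂μ with hu_def
  set v : ℝ := ∫ ω in B, g ω * (1 - p (X ω)) ∂μ with hv_def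
  have ha_pos : 0 < a := by
    rw [← e1]; exact ENNReal.toReal_pos hμ1 (measure_ne_top μ _)
  have hb_pos : 0 < b := by
    rw [← e0]; exact ENNReal.toReal_pos hμ0 (measure_ne_top μ _)
  have h1ε : (0:ℝ) < 1 + ε := by linarith
  set L : ℝ := Real.exp (-c) * (1 + ε) ^ k with hL_def
  set R : ℝ := Real.exp c * (1 + ε) ^ (k + 1) with hR_def
  have hL_pos : 0 < L := mul_pos (Real.exp_pos _) (zpow_pos h1ε k)
  -- pointwise odds bounds on the bin
  have hbin : ∀ x ∈ binSet phat ε k, L * (1 - p x) ≤ p x ∧ p x ≤ R * (1 - p x) := by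
    intro x hx
    obtain ⟨hxl, hxr⟩ := hx
    obtain ⟨hp0, hp1'⟩ := hp01 x
    have hq0 : (0:ℝ) < 1 - p x := by linarith
    obtain ⟨hph0, hph1⟩ := hphat01 x
    have hqh0 : (0:ℝ) < 1 - phat x := by linarith
    have hodds : 0 < p x / (1 - p x) := div_pos hp0 hq0
    have hoddsh : 0 < phat x / (1 - phat x) := div_pos hph0 hqh0
    have ht0 : 0 < (p x / (1 - p x)) / (phat x / (1 - phat x)) := div_pos hodds hoddsh
    have habs := abs_le.mp (hc x)
    have hup : (p x / (1 - p x)) / (phat x / (1 - phat x)) ≤ Real.exp c := by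
      rw [← Real.exp_log ht0]; exact Real.exp_le_exp.mpr habs.2
    have hlow : Real.exp (-c) ≤ (p x / (1 - p x)) / (phat x / (1 - phat x)) := by
      rw [← Real.exp_log ht0]; exact Real.exp_le_exp.mpr habs.1
    have hub : p x / (1 - p x) ≤ R := by
      have h1' : p x / (1 - p x)
          = ((p x / (1 - p x)) / (phat x / (1 - phat x))) * (phat x / (1 - phat x)) :=
        (div_mul_cancel₀ _ hoddsh.ne').symm
      rw [h1', hR_def]
      exact mul_le_mul hup hxr.le hoddsh.le (Real.exp_pos c).le
    have hlb : L ≤ p x / (1 - p x) := by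
      have h1' : p x / (1 - p x)
          = ((p x / (1 - p x)) / (phat x / (1 - phat x))) * (phat x / (1 - phat x)) :=
        (div_mul_cancel₀ _ hoddsh.ne').symm
      rw [h1', hL_def]
      exact mul_le_mul hlow hxl (zpow_pos h1ε k).le ht0.le
    constructor
    · exact (le_div_iff₀ hq0).mp hlb
    · exact (div_le_iff₀ hq0).mp hub
  -- a.e. bounds on g
  have hg0 : 0 ≤ᵐ[μ] g := condExp_nonneg
    (Filter.Eventually.of_forall fun ω => Set.indicator_nonneg (fun _ _ => zero_le_one) ω)
  have hg1 : g ≤ᵐ[μ] fun _ => (1:ℝ) := by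
    have hle : Set.indicator T (fun _ => (1:ℝ)) ≤ᵐ[μ] fun _ => (1:ℝ) :=
      Filter.Eventually.of_forall fun ω => by
        by_cases h : ω ∈ T <;> simp [Set.indicator, h]
    have h2 := condExp_mono (m := MeasurableSpace.comap X inferInstance)
      (hint T hT) (integrable_const 1) hle
    rwa [condExp_const hm] at h2
  -- integrability
  have hgint : Integrable g μ := integrable_condExp
  have hgm : AEStronglyMeasurable g μ := hgint.aestronglyMeasurable
  have hpXm : AEStronglyMeasurable (fun ω => p (X ω)) μ := (hp.comp hX).aestronglyMeasurable
  have hqXm : AEStronglyMeasurable (fun ω => 1 - p (X ω)) μ :=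
    (measurable_const.sub (hp.comp hX)).aestronglyMeasurable
  have hintp : Integrable (fun ω => p (X ω)) μ := by
    refine Integrable.mono' (integrable_const (1:ℝ)) hpXm
      (Filter.Eventually.of_forall fun ω => ?_)
    rw [Real.norm_eq_abs, abs_of_pos (hp01 _).1]
    exact (hp01 _).2.le
  have hintq : Integrable (fun ω => 1 - p (X ω)) μ := by
    refine Integrable.mono' (integrable_const (1:ℝ)) hqXm
      (Filter.Eventually.of_forall fun ω => ?_)
    rw [Real.norm_eq_abs, abs_of_pos (by linarith [(hp01 (X ω)).2] : (0:ℝ) < 1 - p (X ω))]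
    linarith [(hp01 (X ω)).1]
  have hintgp : Integrable (fun ω => g ω * p (X ω)) μ := by
    refine Integrable.mono hgint (hgm.mul hpXm) (Filter.Eventually.of_forall fun ω => ?_)
    rw [Real.norm_eq_abs, Real.norm_eq_abs, abs_mul]
    have h1' : |p (X ω)| ≤ 1 := by
      rw [abs_of_pos (hp01 _).1]; exact (hp01 _).2.le
    nlinarith [abs_nonneg (g ω), abs_nonneg (p (X ω))]
  have hintgq : Integrable (fun ω => g ω * (1 - p (X ω))) μ := by
    refine Integrable.mono hgint (hgm.mul hqXm) (Filter.Eventually.of_forall fun ω => ?_)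
    rw [Real.norm_eq_abs, Real.norm_eq_abs, abs_mul]
    have h1' : |1 - p (X ω)| ≤ 1 := by
      rw [abs_of_pos (by linarith [(hp01 (X ω)).2] : (0:ℝ) < 1 - p (X ω))]
      linarith [(hp01 (X ω)).1]
    nlinarith [abs_nonneg (g ω), abs_nonneg (1 - p (X ω))]
  -- integral monotonicity helper
  have mono : ∀ f1 f2 : Ω → ℝ, Integrable f1 μ → Integrable f2 μ →
      (∀ᵐ ω ∂μ, ω ∈ B → f1 ω ≤ f2 ω) → ∫ ω in B, f1 ω ∂μ ≤ ∫ ω in B, f2 ω ∂μ := by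
    intro f1 f2 hf1 hf2 hae
    exact setIntegral_mono_ae_restrict hf1.integrableOn hf2.integrableOn
      ((ae_restrict_iff' hB).mpr hae)
  have hu_le : u ≤ R * v := by
    have h2 : ∫ ω in B, R * (g ω * (1 - p (X ω))) ∂μ = R * v := integral_const_mul R _
    rw [hu_def, ← h2]
    refine mono _ _ hintgp (hintgq.const_mul R) ?_
    filter_upwards [hg0] with ω hω hωB
    have hx := (hbin _ hωB).2
    nlinarith [mul_le_mul_of_nonneg_left hx hω]
  have hLv_le : L * v ≤ u := by
    have h2 : ∫ ω in B, L * (g ω * (1 - p (X ω))) ∂μ = L * v := integral_const_mul L _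
    rw [hu_def, ← h2]
    refine mono _ _ (hintgq.const_mul L) hintgp ?_
    filter_upwards [hg0] with ω hω hωB
    have hx := (hbin _ hωB).1
    nlinarith [mul_le_mul_of_nonneg_left hx hω]
  have ha_le : a ≤ R * b := by
    have h2 : ∫ ω in B, R * (1 - p (X ω)) ∂μ = R * b := integral_const_mul R _
    rw [ha_def, ← h2]
    refine mono _ _ hintp (hintq.const_mul R) ?_
    refine Filter.Eventually.of_forall fun ω hωB => ?_
    exact (hbin _ hωB).2
  have hLb_le : L * b ≤ a := by
    have h2 : ∫ ω in B, L * (1 - p (X ω)) ∂μ = L * b := integral_const_mul L _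
    rw [ha_def, ← h2]
    refine mono _ _ (hintq.const_mul L) hintp ?_
    refine Filter.Eventually.of_forall fun ω hωB => ?_
    exact (hbin _ hωB).1
  have hu_le_a : u ≤ a := by
    rw [hu_def, ha_def]
    refine mono _ _ hintgp hintp ?_
    filter_upwards [hg0, hg1] with ω hω0 hω1 hωB
    nlinarith [(hp01 (X ω)).1]
  have hv_le_b : v ≤ b := by
    rw [hv_def, hb_def]
    refine mono _ _ hintgq hintq ?_
    filter_upwards [hg0, hg1] with ω hω0 hω1 hωB
    nlinarith [(hp01 (X ω)).1, (hp01 (X ω)).2]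
  -- final algebra
  set K : ℝ := (1 + ε) * Real.exp (2 * c) with hK_def
  have hK_pos : 0 < K := mul_pos h1ε (Real.exp_pos _)
  have hKL : L * K = R := by
    have hz : ((1 + ε):ℝ) ^ (k + 1) = (1 + ε) ^ k * (1 + ε) := zpow_add_one₀ h1ε.ne' k
    have hexp : Real.exp (-c) * Real.exp (2 * c) = Real.exp c := by
      rw [← Real.exp_add]; ring_nf
    calc L * K = (Real.exp (-c) * Real.exp (2 * c)) * ((1 + ε) ^ k * (1 + ε)) := by
          rw [hL_def, hK_def]; ring
      _ = R := by rw [hexp, ← hz, hR_def]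
  rw [hE1, hE0, cond_apply (hAt.inter hB) μ T, cond_apply (hAt.compl.inter hB) μ T,
    ENNReal.toReal_mul, ENNReal.toReal_mul, ENNReal.toReal_inv, ENNReal.toReal_inv,
    e1T, e1, e0T, e0, inv_mul_eq_div, inv_mul_eq_div]
  have hgoal_eq : ε + δ + ε * δ = K - 1 := by rw [hδ, hK_def]; ring
  rw [hgoal_eq, abs_sub_le_iff]
  constructor
  · rw [div_sub_div _ _ ha_pos.ne' hb_pos.ne', div_le_iff₀ (mul_pos ha_pos hb_pos)]
    have f1 : 0 ≤ b * (L * K * v - u) := by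
      refine mul_nonneg hb_pos.le ?_
      rw [hKL]; linarith
    have f2 : 0 ≤ (b - v) * (L * K * b - a) := by
      refine mul_nonneg (by linarith) ?_
      rw [hKL]; linarith
    have f3 : 0 ≤ (K * b) * (a - L * b) := by
      refine mul_nonneg (mul_nonneg hK_pos.le hb_pos.le) (by linarith)
    nlinarith [f1, f2, f3]
  · rw [div_sub_div _ _ hb_pos.ne' ha_pos.ne', div_le_iff₀ (mul_pos hb_pos ha_pos)]
    have f1 : 0 ≤ a * (u - L * v) := mul_nonneg ha_pos.le (by linarith)
    have f2 : 0 ≤ (a - u) * (a - L * b) := mul_nonneg (by linarith) (by linarith)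
    have f3 : 0 ≤ a * (L * K * b - a) := by
      refine mul_nonneg ha_pos.le ?_
      rw [hKL]; linarith
    nlinarith [f1, f2, f3, hL_pos]
end
end
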